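/- For every integer n ≥ 1, the non-commuting graph Γ(U_{6n}) is the complete 4-partite graph K_{n,n,n,2n} with parts Ω₁, Ω₂, Ω₃, Ω₄: two vertices u, v of Γ(U_{6n}) are adjacent if and only if u and v lie in different parts Ω_i, Ω_j (i ≠ j). -/

import Mathlib

/-- The inversion automorphism of `Multiplicative (ZMod 3)` (i.e. `b ↦ b⁻¹`). -/
def negAut : MulAut (Multiplicative (ZMod 3)) := MulEquiv.inv (Multiplicative (ZMod 3))

lemma negAut_sq : negAut * negAut = 1 := by
  ext x
  simp [negAut]

/-- The action of `ZMod (2*n)` on `Multiplicative (ZMod 3)`, where the generator acts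
by inversion (negation). -/
def U6nAct (n : ℕ) : Multiplicative (ZMod (2 * n)) →* MulAut (Multiplicative (ZMod 3)) :=
  AddMonoidHom.toMultiplicativeLeft
    (ZMod.lift (2 * n) ⟨zmultiplesHom _ (Additive.ofMul negAut), by
      show ((2 * n : ℕ) : ℤ) • Additive.ofMul negAut = 0
      have : negAut ^ (2 * n) = 1 := by
        rw [pow_mul, pow_two, negAut_sq, one_pow]
      rw [← zpow_natCast negAut, Nat.cast_mul] at this
      rw [show ((2 * n : ℕ) : ℤ) • Additive.ofMul negAut
            = Additive.ofMul (negAut ^ ((2 * n : ℕ) : ℤ)) from rfl]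
      rw [Nat.cast_mul, this]; rfl⟩)

/-- The group `U_{6n} = ⟨a, b | a^(2n) = b³ = 1, a⁻¹ b a = b⁻¹⟩`, realized as the
semidirect product `(ZMod 3) ⋊ (ZMod (2n))` where the generator of `ZMod (2n)` acts by
negation. -/
abbrev U6n (n : ℕ) := SemidirectProduct (Multiplicative (ZMod 3))
    (Multiplicative (ZMod (2 * n))) (U6nAct n)

/-- The generator `a` of `U_{6n}`, of order `2n`. -/
def Ua (n : ℕ) : U6n n := SemidirectProduct.inr (Multiplicative.ofAdd 1)

/-- The generator `b` of `U_{6n}`, of order `3`. -/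
def Ub (n : ℕ) : U6n n := SemidirectProduct.inl (Multiplicative.ofAdd 1)

/-- The non-commuting graph of `U_{6n}`: vertices are the non-central elements, two
distinct vertices are adjacent iff they do not commute. -/
def ncGraph (n : ℕ) : SimpleGraph {x : U6n n // x ∉ Subgroup.center (U6n n)} where
  Adj u v := u.val * v.val ≠ v.val * u.val
  symm := ⟨fun _ _ h => fun e => h e.symm⟩
  loopless := ⟨fun _ h => h rfl⟩

/-- The partition of the vertex set of the non-commuting graph of `U_{6n}` into the four
parts `Ω₁, Ω₂, Ω₃, Ω₄`. -/
def Omega (n : ℕ) : Fin 4 → Set {x : U6n n // x ∉ Subgroup.center (U6n n)} :=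
  ![{v | ∃ r < n, v.val = Ua n ^ (2 * r + 1)},
    {v | ∃ r < n, v.val = Ua n ^ (2 * r + 1) * Ub n},
    {v | ∃ r < n, v.val = Ua n ^ (2 * r + 1) * Ub n ^ 2},
    {v | ∃ r < n, ∃ k, (k = 1 ∨ k = 2) ∧ v.val = Ua n ^ (2 * r) * Ub n ^ k}]


section helperU6n
set_option linter.unusedSectionVars false
variable (n : ℕ)

lemma U6nAct_intCast (k : ℤ) :
    U6nAct n (Multiplicative.ofAdd ((k : ZMod (2 * n)))) = negAut ^ k := by
  have : U6nAct n (Multiplicative.ofAdd ((k : ZMod (2 * n))))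
      = Additive.toMul ((ZMod.lift (2*n) ⟨zmultiplesHom _ (Additive.ofMul negAut), by
        show ((2 * n : ℕ) : ℤ) • Additive.ofMul negAut = 0
        have : negAut ^ (2 * n) = 1 := by rw [pow_mul, pow_two, negAut_sq, one_pow]
        rw [← zpow_natCast negAut, Nat.cast_mul] at this
        rw [show ((2 * n : ℕ) : ℤ) • Additive.ofMul negAut
              = Additive.ofMul (negAut ^ ((2 * n : ℕ) : ℤ)) from rfl]
        rw [Nat.cast_mul, this]; rfl⟩) ((k : ZMod (2*n)))) := rfl
  rw [this, ZMod.lift_coe]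
  rfl

lemma negAut_pow_even {k : ℕ} (h : Even k) : negAut ^ k = 1 := by
  obtain ⟨j, rfl⟩ := h
  rw [← two_mul, pow_mul, pow_two, negAut_sq, one_pow]

lemma negAut_pow_odd {k : ℕ} (h : Odd k) : negAut ^ k = negAut := by
  obtain ⟨j, rfl⟩ := h
  rw [pow_succ, pow_mul, pow_two, negAut_sq, one_pow, one_mul]

set_option linter.unusedSectionVars false
variable [NeZero n]

lemma act_apply (m : ZMod (2 * n)) (x : Multiplicative (ZMod 3)) :
    U6nAct n (Multiplicative.ofAdd m) x = if Even m.val then x else x⁻¹ := by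
  have hm : ((m.val : ℤ) : ZMod (2 * n)) = m := by
    push_cast
    simp [ZMod.natCast_val, ZMod.cast_id]
  conv_lhs => rw [← hm, U6nAct_intCast, zpow_natCast]
  rcases Nat.even_or_odd m.val with h | h
  · rw [negAut_pow_even h, if_pos h]; rfl
  · rw [negAut_pow_odd h, if_neg (Nat.not_even_iff_odd.mpr h)]; rfl

lemma act_apply' (g : Multiplicative (ZMod (2 * n))) (x : Multiplicative (ZMod 3)) :
    U6nAct n g x = if Even g.toAdd.val then x else x⁻¹ := by
  rw [← ofAdd_toAdd g, act_apply]; rfl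

lemma U6n_mul_eq_mul_iff (u v : U6n n) :
    u * v = v * u ↔ u.left * U6nAct n u.right v.left = v.left * U6nAct n v.right u.left := by
  rw [SemidirectProduct.ext_iff]
  simp [SemidirectProduct.mul_left, SemidirectProduct.mul_right, mul_comm]

lemma Ua_pow (k : ℕ) :
    Ua n ^ k = SemidirectProduct.inr (Multiplicative.ofAdd ((k : ZMod (2 * n)))) := by
  rw [Ua, ← map_pow]
  congr 1
  rw [← ofAdd_nsmul, nsmul_eq_mul, mul_one]

lemma Ub_pow (k : ℕ) :
    Ub n ^ k = SemidirectProduct.inl (Multiplicative.ofAdd ((k : ZMod 3))) := by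
  rw [Ub, ← map_pow]
  congr 1
  rw [← ofAdd_nsmul, nsmul_eq_mul, mul_one]



lemma two_n_pos : 0 < 2 * n := by have := NeZero.pos n; omega

instance : NeZero (2 * n) := ⟨by have := NeZero.pos n; omega⟩

lemma toAdd_one' : (Multiplicative.toAdd (1 : Multiplicative (ZMod (2*n)))).val = 0 := by
  simp

lemma val_natCast_even (r : ℕ) : Even ((r : ZMod (2*n)).val) ↔ Even r := by
  rw [ZMod.val_natCast, Nat.even_iff, Nat.even_iff, Nat.mod_mod_of_dvd _ ⟨n, rfl⟩]

lemma mem_center_iff' (x : U6n n) :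
    x ∈ Subgroup.center (U6n n) ↔ x.left = 1 ∧ Even x.right.toAdd.val := by
  constructor
  · intro h
    have h' := Subgroup.mem_center_iff.mp h
    have hEven : Even x.right.toAdd.val := by
      by_contra hodd
      have hb := congrArg SemidirectProduct.left (h' (Ub n))
      rw [SemidirectProduct.mul_left, SemidirectProduct.mul_left] at hb
      simp only [Ub, SemidirectProduct.left_inl, SemidirectProduct.right_inl, map_one,
        MulAut.one_apply, act_apply' n x.right] at hb
      rw [if_neg hodd] at hb
      rw [mul_comm] at hb
      have : (Multiplicative.ofAdd (1 : ZMod 3)) = (Multiplicative.ofAdd (1 : ZMod 3))⁻¹ :=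
        mul_left_cancel hb
      exact absurd this (by decide)
    refine ⟨?_, hEven⟩
    have ha := congrArg SemidirectProduct.left (h' (Ua n))
    rw [SemidirectProduct.mul_left, SemidirectProduct.mul_left] at ha
    simp only [Ua, SemidirectProduct.left_inr, SemidirectProduct.right_inr, one_mul,
      map_one, mul_one, act_apply' n] at ha
    have h1 : (Multiplicative.toAdd (Multiplicative.ofAdd (1 : ZMod (2*n)))).val = 1 := by
      rw [toAdd_ofAdd]
      exact ZMod.val_one_eq_one_mod (2*n) ▸ (Nat.mod_eq_of_lt (by have := NeZero.pos n; omega))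
    rw [h1] at ha
    norm_num at ha
    have : ∀ t : Multiplicative (ZMod 3), t⁻¹ = t → t = 1 := by decide
    exact this _ ha
  · rintro ⟨h1, h2⟩
    rw [Subgroup.mem_center_iff]
    intro g
    ext
    · rw [SemidirectProduct.mul_left, SemidirectProduct.mul_left, h1, map_one, mul_one,
        act_apply' n, if_pos h2, one_mul]
    · rw [SemidirectProduct.mul_right, SemidirectProduct.mul_right]
      exact mul_comm g.right x.right



lemma prod_right (r k : ℕ) :
    (Ua n ^ r * Ub n ^ k).right = Multiplicative.ofAdd ((r : ZMod (2*n))) := by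
  rw [SemidirectProduct.mul_right, Ua_pow, Ub_pow, SemidirectProduct.right_inr,
    SemidirectProduct.right_inl, mul_one]

lemma prod_left (r k : ℕ) :
    (Ua n ^ r * Ub n ^ k).left =
      if Even r then Multiplicative.ofAdd ((k : ZMod 3))
      else (Multiplicative.ofAdd ((k : ZMod 3)))⁻¹ := by
  rw [SemidirectProduct.mul_left, Ua_pow, Ub_pow, SemidirectProduct.left_inr,
    SemidirectProduct.left_inl, SemidirectProduct.right_inr, one_mul, act_apply' n]
  rw [toAdd_ofAdd]
  by_cases h : Even r
  · rw [if_pos h, if_pos ((val_natCast_even n r).mpr h)]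
  · rw [if_neg h, if_neg (fun hc => h ((val_natCast_even n r).mp hc))]

lemma ofAdd_natCast_val (m : Multiplicative (ZMod (2*n))) :
    Multiplicative.ofAdd (((Multiplicative.toAdd m).val : ZMod (2*n))) = m := by
  simp [ZMod.natCast_val, ZMod.cast_id]

lemma mem_O0_iff (v : {x : U6n n // x ∉ Subgroup.center (U6n n)}) :
    v ∈ Omega n 0 ↔ v.val.left = 1 ∧ ¬ Even (Multiplicative.toAdd v.val.right).val := by
  constructor
  · rintro ⟨r, hr, hv⟩
    rw [hv, Ua_pow]
    refine ⟨SemidirectProduct.left_inr _, ?_⟩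
    rw [SemidirectProduct.right_inr, toAdd_ofAdd, val_natCast_even n]
    simp [Nat.even_iff, Nat.add_mod]
  · rintro ⟨h1, h2⟩
    rw [Nat.not_even_iff_odd] at h2
    obtain ⟨r, hr⟩ := h2
    have hlt : (Multiplicative.toAdd v.val.right).val < 2 * n := ZMod.val_lt _
    refine ⟨r, by omega, ?_⟩
    rw [Ua_pow, ← hr]
    ext
    · rw [h1, SemidirectProduct.left_inr]
    · rw [SemidirectProduct.right_inr, ofAdd_natCast_val]

lemma mem_O1_iff (v : {x : U6n n // x ∉ Subgroup.center (U6n n)}) :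
    v ∈ Omega n 1 ↔ v.val.left = Multiplicative.ofAdd (2 : ZMod 3) ∧
      ¬ Even (Multiplicative.toAdd v.val.right).val := by
  constructor
  · rintro ⟨r, hr, hv⟩
    rw [hv, show Ub n = Ub n ^ 1 from (pow_one _).symm, prod_left, prod_right]
    have hodd : ¬ Even (2 * r + 1) := by simp [Nat.even_iff, Nat.add_mod]
    refine ⟨by rw [if_neg hodd]; decide, ?_⟩
    rw [toAdd_ofAdd, val_natCast_even n]; exact hodd
  · rintro ⟨h1, h2⟩
    rw [Nat.not_even_iff_odd] at h2
    obtain ⟨r, hr⟩ := h2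
    have hlt : (Multiplicative.toAdd v.val.right).val < 2 * n := ZMod.val_lt _
    refine ⟨r, by omega, ?_⟩
    rw [show Ub n = Ub n ^ 1 from (pow_one _).symm]
    ext
    · rw [h1, prod_left, if_neg (by simp [Nat.even_iff, Nat.add_mod])]
      decide
    · rw [prod_right, ← hr, ofAdd_natCast_val]

lemma mem_O2_iff (v : {x : U6n n // x ∉ Subgroup.center (U6n n)}) :
    v ∈ Omega n 2 ↔ v.val.left = Multiplicative.ofAdd (1 : ZMod 3) ∧
      ¬ Even (Multiplicative.toAdd v.val.right).val := by
  constructor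
  · rintro ⟨r, hr, hv⟩
    rw [hv, prod_left, prod_right]
    have hodd : ¬ Even (2 * r + 1) := by simp [Nat.even_iff, Nat.add_mod]
    refine ⟨by rw [if_neg hodd]; decide, ?_⟩
    rw [toAdd_ofAdd, val_natCast_even n]; exact hodd
  · rintro ⟨h1, h2⟩
    rw [Nat.not_even_iff_odd] at h2
    obtain ⟨r, hr⟩ := h2
    have hlt : (Multiplicative.toAdd v.val.right).val < 2 * n := ZMod.val_lt _
    refine ⟨r, by omega, ?_⟩
    ext
    · rw [h1, prod_left, if_neg (by simp [Nat.even_iff, Nat.add_mod])]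
      decide
    · rw [prod_right, ← hr, ofAdd_natCast_val]

lemma mem_O3_iff (v : {x : U6n n // x ∉ Subgroup.center (U6n n)}) :
    v ∈ Omega n 3 ↔ (v.val.left = Multiplicative.ofAdd (1 : ZMod 3) ∨
        v.val.left = Multiplicative.ofAdd (2 : ZMod 3)) ∧
      Even (Multiplicative.toAdd v.val.right).val := by
  constructor
  · rintro ⟨r, hr, k, hk, hv⟩
    rw [hv, prod_left, prod_right]
    have heven : Even (2 * r) := ⟨r, two_mul r⟩
    constructor
    · rw [if_pos heven]
      rcases hk with rfl | rfl
      · left; norm_num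
      · right; norm_num
    · rw [toAdd_ofAdd, val_natCast_even n]; exact heven
  · rintro ⟨h1, h2⟩
    obtain ⟨r, hr⟩ := h2
    have hlt : (Multiplicative.toAdd v.val.right).val < 2 * n := ZMod.val_lt _
    have hre : (Multiplicative.toAdd v.val.right).val = 2 * r := by omega
    refine ⟨r, by omega, ?_⟩
    rcases h1 with h1 | h1
    · refine ⟨1, Or.inl rfl, ?_⟩
      ext
      · rw [h1, prod_left, if_pos ⟨r, two_mul r⟩]; norm_num
      · rw [prod_right, ← hre, ofAdd_natCast_val]
    · refine ⟨2, Or.inr rfl, ?_⟩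
      ext
      · rw [h1, prod_left, if_pos ⟨r, two_mul r⟩]; norm_num
      · rw [prod_right, ← hre, ofAdd_natCast_val]



def clf (t : Multiplicative (ZMod 3)) : Fin 4 :=
  if t = 1 then 0 else if t = Multiplicative.ofAdd 2 then 1 else 2

def cl (v : {x : U6n n // x ∉ Subgroup.center (U6n n)}) : Fin 4 :=
  if Even (Multiplicative.toAdd v.val.right).val then 3 else clf v.val.left

lemma left_ne_one_of_even (v : {x : U6n n // x ∉ Subgroup.center (U6n n)})
    (h : Even (Multiplicative.toAdd v.val.right).val) : v.val.left ≠ 1 := by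
  intro h1
  exact v.property ((mem_center_iff' n v.val).mpr ⟨h1, h⟩)

lemma mem_cl (v : {x : U6n n // x ∉ Subgroup.center (U6n n)}) : v ∈ Omega n (cl n v) := by
  by_cases hp : Even (Multiplicative.toAdd v.val.right).val
  · rw [show cl n v = 3 from if_pos hp, mem_O3_iff]
    have h1 := left_ne_one_of_even n v hp
    have : ∀ t : Multiplicative (ZMod 3), t ≠ 1 →
        (t = Multiplicative.ofAdd (1 : ZMod 3) ∨ t = Multiplicative.ofAdd (2 : ZMod 3)) := by
      decide
    exact ⟨this _ h1, hp⟩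
  · rw [show cl n v = clf v.val.left from if_neg hp]
    have : ∀ t : Multiplicative (ZMod 3), t = 1 ∨ t = Multiplicative.ofAdd (2 : ZMod 3) ∨
        t = Multiplicative.ofAdd (1 : ZMod 3) := by decide
    rcases this v.val.left with h | h | h
    · rw [show clf v.val.left = 0 by rw [clf, if_pos h], mem_O0_iff]; exact ⟨h, hp⟩
    · rw [show clf v.val.left = 1 by rw [clf, if_neg (by rw [h]; decide), if_pos h], mem_O1_iff]
      exact ⟨h, hp⟩
    · rw [show clf v.val.left = 2 by
        rw [clf, if_neg (by rw [h]; decide), if_neg (by rw [h]; decide)], mem_O2_iff]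
      exact ⟨h, hp⟩

lemma cl_unique (v : {x : U6n n // x ∉ Subgroup.center (U6n n)}) (i : Fin 4)
    (hv : v ∈ Omega n i) : cl n v = i := by
  match i with
  | 0 =>
    rw [mem_O0_iff] at hv
    rw [show cl n v = clf v.val.left from if_neg hv.2, clf, if_pos hv.1]
  | 1 =>
    rw [mem_O1_iff] at hv
    rw [show cl n v = clf v.val.left from if_neg hv.2, clf,
      if_neg (by rw [hv.1]; decide), if_pos hv.1]
  | 2 =>
    rw [mem_O2_iff] at hv
    rw [show cl n v = clf v.val.left from if_neg hv.2, clf,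
      if_neg (by rw [hv.1]; decide), if_neg (by rw [hv.1]; decide)]
  | 3 =>
    rw [mem_O3_iff] at hv
    exact if_pos hv.2

lemma clf_ne_three (t : Multiplicative (ZMod 3)) : clf t ≠ 3 := by
  rw [clf]; split_ifs <;> decide

lemma commute_iff_cl_eq (u v : {x : U6n n // x ∉ Subgroup.center (U6n n)}) :
    u.val * v.val = v.val * u.val ↔ cl n u = cl n v := by
  rw [U6n_mul_eq_mul_iff, act_apply' n, act_apply' n]
  by_cases hu : Even (Multiplicative.toAdd u.val.right).val <;>
    by_cases hv : Even (Multiplicative.toAdd v.val.right).val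
  · rw [if_pos hu, if_pos hv, show cl n u = 3 from if_pos hu, show cl n v = 3 from if_pos hv]
    simp [mul_comm]
  · rw [if_pos hu, if_neg hv, show cl n u = 3 from if_pos hu,
      show cl n v = clf v.val.left from if_neg hv]
    have h1 := left_ne_one_of_even n u hu
    have key : ∀ x y : Multiplicative (ZMod 3), x ≠ 1 → ¬(x * y = y * x⁻¹) := by decide
    constructor
    · intro h; exact absurd h (key _ _ h1)
    · intro h; exact absurd h.symm (clf_ne_three _)
  · rw [if_neg hu, if_pos hv, show cl n u = clf u.val.left from if_neg hu,
      show cl n v = 3 from if_pos hv]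
    have h1 := left_ne_one_of_even n v hv
    have key : ∀ x y : Multiplicative (ZMod 3), y ≠ 1 → ¬(x * y⁻¹ = y * x) := by decide
    constructor
    · intro h; exact absurd h (key _ _ h1)
    · intro h; exact absurd h (clf_ne_three _)
  · rw [if_neg hu, if_neg hv, show cl n u = clf u.val.left from if_neg hu,
      show cl n v = clf v.val.left from if_neg hv]
    have key : ∀ x y : Multiplicative (ZMod 3), x * y⁻¹ = y * x⁻¹ ↔ x = y := by decide
    rw [key]
    have keyc : ∀ x y : Multiplicative (ZMod 3), clf x = clf y ↔ x = y := by decide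
    rw [keyc]



lemma nc_odd (x : U6n n) (h : ¬ Even (Multiplicative.toAdd x.right).val) :
    x ∉ Subgroup.center (U6n n) :=
  fun hc => h ((mem_center_iff' n x).mp hc).2

lemma odd_val_pow (r : ℕ) :
    ¬ Even (Multiplicative.toAdd ((Multiplicative.ofAdd ((2*r+1 : ℕ) : ZMod (2*n))))).val := by
  rw [toAdd_ofAdd, val_natCast_even n]
  simp [Nat.even_iff, Nat.add_mod]

lemma ncard_Iio (m : ℕ) : (Set.Iio m).ncard = m := by
  rw [show Set.Iio m = ↑(Finset.range m) by ext; simp, Set.ncard_coe_finset, Finset.card_range]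

lemma nc_O0 (r : ℕ) : Ua n ^ (2*r+1) ∉ Subgroup.center (U6n n) := by
  apply nc_odd
  rw [Ua_pow, SemidirectProduct.right_inr]
  exact odd_val_pow n r

lemma nc_O1 (r : ℕ) : Ua n ^ (2*r+1) * Ub n ∉ Subgroup.center (U6n n) := by
  apply nc_odd
  rw [show Ub n = Ub n ^ 1 from (pow_one _).symm, prod_right]
  exact odd_val_pow n r

lemma nc_O2 (r : ℕ) : Ua n ^ (2*r+1) * Ub n ^ 2 ∉ Subgroup.center (U6n n) := by
  apply nc_odd
  rw [prod_right]
  exact odd_val_pow n r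

lemma left_O3 (r k : ℕ) :
    (Ua n ^ (2*r) * Ub n ^ k).left = Multiplicative.ofAdd ((k : ZMod 3)) := by
  rw [prod_left, if_pos ⟨r, two_mul r⟩]

lemma nc_O3 (r k : ℕ) (hk : k = 1 ∨ k = 2) :
    Ua n ^ (2*r) * Ub n ^ k ∉ Subgroup.center (U6n n) := by
  intro hc
  have h1 := ((mem_center_iff' n _).mp hc).1
  rw [left_O3] at h1
  rcases hk with rfl | rfl
  · exact absurd h1 (by decide)
  · exact absurd h1 (by decide)

lemma val_inj_odd {r s : ℕ} (hr : r < n) (hs : s < n)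
    (h : ((2*r+1 : ℕ) : ZMod (2*n)) = ((2*s+1 : ℕ) : ZMod (2*n))) : r = s := by
  have := congrArg ZMod.val h
  rw [ZMod.val_cast_of_lt (by omega), ZMod.val_cast_of_lt (by omega)] at this
  omega

lemma val_inj_even {r s : ℕ} (hr : r < n) (hs : s < n)
    (h : ((2*r : ℕ) : ZMod (2*n)) = ((2*s : ℕ) : ZMod (2*n))) : r = s := by
  have := congrArg ZMod.val h
  rw [ZMod.val_cast_of_lt (by omega), ZMod.val_cast_of_lt (by omega)] at this
  omega

lemma ncard_O0 : (Omega n 0).ncard = n := by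
  have him : Omega n 0 =
      (fun r : ℕ => (⟨Ua n ^ (2*r+1), nc_O0 n r⟩ :
        {x : U6n n // x ∉ Subgroup.center (U6n n)})) '' Set.Iio n := by
    ext v
    simp only [Set.mem_image, Set.mem_Iio]
    constructor
    · rintro ⟨r, hr, hv⟩; exact ⟨r, hr, Subtype.ext hv.symm⟩
    · rintro ⟨r, hr, hv⟩; exact ⟨r, hr, (congrArg Subtype.val hv).symm⟩
  rw [him, Set.ncard_image_of_injOn, ncard_Iio]
  intro r hr s hs h
  have h' := congrArg Subtype.val h
  simp only [Ua_pow, SemidirectProduct.inr_inj] at h'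
  exact val_inj_odd n hr hs (Multiplicative.ofAdd.injective h')

lemma ncard_O1 : (Omega n 1).ncard = n := by
  have him : Omega n 1 =
      (fun r : ℕ => (⟨Ua n ^ (2*r+1) * Ub n, nc_O1 n r⟩ :
        {x : U6n n // x ∉ Subgroup.center (U6n n)})) '' Set.Iio n := by
    ext v
    simp only [Set.mem_image, Set.mem_Iio]
    constructor
    · rintro ⟨r, hr, hv⟩; exact ⟨r, hr, Subtype.ext hv.symm⟩
    · rintro ⟨r, hr, hv⟩; exact ⟨r, hr, (congrArg Subtype.val hv).symm⟩
  rw [him, Set.ncard_image_of_injOn, ncard_Iio]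
  intro r hr s hs h
  have h' : (Ua n ^ (2*r+1) * Ub n).right = (Ua n ^ (2*s+1) * Ub n).right :=
    congrArg (fun x => (Subtype.val x).right) h
  rw [show Ub n = Ub n ^ 1 from (pow_one _).symm, prod_right, prod_right] at h'
  exact val_inj_odd n hr hs (Multiplicative.ofAdd.injective h')

lemma ncard_O2 : (Omega n 2).ncard = n := by
  have him : Omega n 2 =
      (fun r : ℕ => (⟨Ua n ^ (2*r+1) * Ub n ^ 2, nc_O2 n r⟩ :
        {x : U6n n // x ∉ Subgroup.center (U6n n)})) '' Set.Iio n := by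
    ext v
    simp only [Set.mem_image, Set.mem_Iio]
    constructor
    · rintro ⟨r, hr, hv⟩; exact ⟨r, hr, Subtype.ext hv.symm⟩
    · rintro ⟨r, hr, hv⟩; exact ⟨r, hr, (congrArg Subtype.val hv).symm⟩
  rw [him, Set.ncard_image_of_injOn, ncard_Iio]
  intro r hr s hs h
  have h' := congrArg (fun x => (Subtype.val x).right) h
  simp only [prod_right] at h'
  exact val_inj_odd n hr hs (Multiplicative.ofAdd.injective h')

lemma ncard_O3 : (Omega n 3).ncard = 2 * n := by
  have him : Omega n 3 =
      (fun r : ℕ => (⟨Ua n ^ (2*r) * Ub n ^ 1, nc_O3 n r 1 (Or.inl rfl)⟩ :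
        {x : U6n n // x ∉ Subgroup.center (U6n n)})) '' Set.Iio n ∪
      (fun r : ℕ => (⟨Ua n ^ (2*r) * Ub n ^ 2, nc_O3 n r 2 (Or.inr rfl)⟩ :
        {x : U6n n // x ∉ Subgroup.center (U6n n)})) '' Set.Iio n := by
    ext v
    simp only [Set.mem_union, Set.mem_image, Set.mem_Iio]
    constructor
    · rintro ⟨r, hr, k, hk | hk, hv⟩
      · subst hk; exact Or.inl ⟨r, hr, Subtype.ext hv.symm⟩
      · subst hk; exact Or.inr ⟨r, hr, Subtype.ext hv.symm⟩
    · rintro (⟨r, hr, hv⟩ | ⟨r, hr, hv⟩)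
      · exact ⟨r, hr, 1, Or.inl rfl, (congrArg Subtype.val hv).symm⟩
      · exact ⟨r, hr, 2, Or.inr rfl, (congrArg Subtype.val hv).symm⟩
  have hinj1 : Set.InjOn (fun r : ℕ => (⟨Ua n ^ (2*r) * Ub n ^ 1, nc_O3 n r 1 (Or.inl rfl)⟩ :
      {x : U6n n // x ∉ Subgroup.center (U6n n)})) (Set.Iio n) := by
    intro r hr s hs h
    have h' := congrArg (fun x => (Subtype.val x).right) h
    simp only [prod_right] at h'
    exact val_inj_even n hr hs (Multiplicative.ofAdd.injective h')
  have hinj2 : Set.InjOn (fun r : ℕ => (⟨Ua n ^ (2*r) * Ub n ^ 2, nc_O3 n r 2 (Or.inr rfl)⟩ :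
      {x : U6n n // x ∉ Subgroup.center (U6n n)})) (Set.Iio n) := by
    intro r hr s hs h
    have h' := congrArg (fun x => (Subtype.val x).right) h
    simp only [prod_right] at h'
    exact val_inj_even n hr hs (Multiplicative.ofAdd.injective h')
  have hdisj : Disjoint
      ((fun r : ℕ => (⟨Ua n ^ (2*r) * Ub n ^ 1, nc_O3 n r 1 (Or.inl rfl)⟩ :
        {x : U6n n // x ∉ Subgroup.center (U6n n)})) '' Set.Iio n)
      ((fun r : ℕ => (⟨Ua n ^ (2*r) * Ub n ^ 2, nc_O3 n r 2 (Or.inr rfl)⟩ :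
        {x : U6n n // x ∉ Subgroup.center (U6n n)})) '' Set.Iio n) := by
    rw [Set.disjoint_left]
    rintro v ⟨r, hr, hv1⟩ ⟨s, hs, hv2⟩
    have h1 := congrArg (fun x => (Subtype.val x).left) hv1
    have h2 := congrArg (fun x => (Subtype.val x).left) hv2
    simp only [left_O3] at h1 h2
    rw [← h2] at h1
    exact absurd h1 (by decide)
  rw [him, Set.ncard_union_eq hdisj ((Set.finite_Iio n).image _) ((Set.finite_Iio n).image _),
    Set.ncard_image_of_injOn hinj1, Set.ncard_image_of_injOn hinj2, ncard_Iio]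
  omega


end helperU6n

/-- The non-commuting graph of `U_{6n}` is the complete 4-partite graph `K_{n,n,n,2n}`
with parts `Ω₁, Ω₂, Ω₃, Ω₄`: the parts have sizes `n, n, n, 2n`, they partition the
vertex set, and two vertices are adjacent iff they lie in different parts. -/
theorem U6n_complete_four_partite (n : ℕ) (hn : 1 ≤ n) :
    (Omega n 0).ncard = n ∧ (Omega n 1).ncard = n ∧ (Omega n 2).ncard = n ∧
    (Omega n 3).ncard = 2 * n ∧
    (∀ i j : Fin 4, i ≠ j → Disjoint (Omega n i) (Omega n j)) ∧
    (⋃ i, Omega n i) = Set.univ ∧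
    (∀ u v, (ncGraph n).Adj u v ↔
      ∃ i j : Fin 4, i ≠ j ∧ u ∈ Omega n i ∧ v ∈ Omega n j) := by
  haveI : NeZero n := ⟨by omega⟩
  refine ⟨ncard_O0 n, ncard_O1 n, ncard_O2 n, ncard_O3 n, ?_, ?_, ?_⟩
  · intro i j hij
    rw [Set.disjoint_left]
    intro v hi hj
    exact hij ((cl_unique n v i hi).symm.trans (cl_unique n v j hj))
  · ext v
    simp only [Set.mem_iUnion, Set.mem_univ, iff_true]
    exact ⟨cl n v, mem_cl n v⟩
  · intro u v
    rw [show (ncGraph n).Adj u v ↔ ¬(u.val * v.val = v.val * u.val) from Iff.rfl,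
      commute_iff_cl_eq n u v]
    constructor
    · intro h
      exact ⟨cl n u, cl n v, h, mem_cl n u, mem_cl n v⟩
    · rintro ⟨i, j, hij, hu, hv⟩
      rw [cl_unique n u i hu, cl_unique n v j hv]
      exact hij
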